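/- In the setting of the previous construction, with U_m = ⋃_{k=1}^m Y_{n_k} (where S = {n_1 < n_2 < ⋯} is infinite) and V_m = ⋃_{k>m} Y_{n_k}, we have sup_{z ∈ V_m} |F(z)| → 0 as m → ∞, and hence (1 − χ_{U_m})F converges uniformly on X to (1 − χ_U)F. -/

import Mathlib

open Set Metric Filter Topology

lemma stmt6_key {X : Type*} [MetricSpace X] [CompactSpace X]
    (Y : Set X)
    (Yn : ℕ → Set X) (hclopen : ∀ m, IsClopen (Yn m))
    (hdisj : Pairwise (Function.onFun Disjoint Yn)) (hunion : (⋃ m, Yn m) = Yᶜ)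
    (hdiam : Tendsto (fun m => Metric.diam (Yn m)) atTop (nhds 0))
    (F : X → ℂ) (hF : Continuous F)
    (x : X) (r : ℝ)
    (hvan : ∀ z ∈ closedBall x r ∩ Y, F z = 0)
    (nk : ℕ → ℕ) (hmono : StrictMono nk)
    (henum : ∀ m, (Yn m ∩ closedBall x r).Nonempty ↔ ∃ k, nk k = m) :
    ∀ ε > 0, ∃ M : ℕ, ∀ k ≥ M, ∀ z ∈ Yn (nk k), ‖F z‖ ≤ ε := by
  intro ε hε
  by_contra h
  push_neg at h
  choose k hk z hz hFz using h
  obtain ⟨z₀, -, φ, hφ, hconv⟩ := isCompact_univ.tendsto_subseq (fun j => mem_univ (z j))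
  choose w hw using fun j => ((henum (nk (k j))).mpr ⟨k j, rfl⟩)
  have hidx : Tendsto (fun j => nk (k (φ j))) atTop atTop := by
    apply tendsto_atTop_mono (fun j => ?_) tendsto_id
    calc (j : ℕ) ≤ φ j := hφ.le_apply
    _ ≤ k (φ j) := hk _
    _ ≤ nk (k (φ j)) := hmono.le_apply
  have hdistwz : Tendsto (fun j => dist (z (φ j)) (w (φ j))) atTop (nhds 0) := by
    apply squeeze_zero (fun j => dist_nonneg) (fun j => ?_) (hdiam.comp hidx)
    exact dist_le_diam_of_mem (IsCompact.isBounded (isCompact_univ.of_isClosed_subset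
      (hclopen _).isClosed (subset_univ _))) (hz _) (hw _).1
  have hwconv : Tendsto (fun j => w (φ j)) atTop (nhds z₀) :=
    hconv.congr_dist hdistwz
  have hball : z₀ ∈ closedBall x r :=
    Metric.isClosed_closedBall.mem_of_tendsto hwconv (Eventually.of_forall fun j => (hw _).2)
  have hY : z₀ ∈ Y := by
    by_contra hzY
    have : z₀ ∈ ⋃ m, Yn m := hunion ▸ hzY
    obtain ⟨m, hm⟩ := mem_iUnion.mp this
    have hev : ∀ᶠ j in atTop, z (φ j) ∈ Yn m :=
      hconv.eventually ((hclopen m).isOpen.eventually_mem hm)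
    have hev2 : ∀ᶠ j in atTop, m < nk (k (φ j)) := hidx.eventually_gt_atTop m
    obtain ⟨j, h1, h2⟩ := (hev.and hev2).exists
    exact (Set.disjoint_left.mp (hdisj h2.ne') (hz _)) h1
  have hFz₀ : F z₀ = 0 := hvan z₀ ⟨hball, hY⟩
  have : Tendsto (fun j => ‖F (z (φ j))‖) atTop (nhds 0) := by
    have := (hF.tendsto z₀).comp hconv
    rw [hFz₀] at this
    simpa [Function.comp_def] using (continuous_norm.tendsto (0:ℂ)).comp this
  have : ε ≤ 0 := ge_of_tendsto this (Eventually.of_forall fun j => (hFz (φ j)).le)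
  linarith

/-- With `S = {m | Yn m meets closedBall x r}` infinite, enumerated increasingly by `nk`,
`U_m = ⋃_{k<m} Yn (nk k)` and `V_m = ⋃_{k≥m} Yn (nk k)`: the sup of `|F|` over `V_m`
tends to `0`, and `(1 - χ_{U_m})F → (1 - χ_U)F` uniformly on `X`. -/
theorem stmt6 {X : Type*} [MetricSpace X] [CompactSpace X]
    (Y : Set X) (hYcl : IsClosed Y) (hYne : Y.Nonempty)
    (Yn : ℕ → Set X) (hclopen : ∀ m, IsClopen (Yn m)) (hne : ∀ m, (Yn m).Nonempty)
    (hdisj : Pairwise (Function.onFun Disjoint Yn)) (hunion : (⋃ m, Yn m) = Yᶜ)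
    (hdiam : Tendsto (fun m => Metric.diam (Yn m)) atTop (nhds 0))
    (F : X → ℂ) (hF : Continuous F)
    (x : X) (hx : x ∈ Y) (r : ℝ) (hr : 0 < r)
    (hvan : ∀ z ∈ closedBall x r ∩ Y, F z = 0)
    (nk : ℕ → ℕ) (hmono : StrictMono nk)
    (henum : ∀ m, (Yn m ∩ closedBall x r).Nonempty ↔ ∃ k, nk k = m)
    (U : Set X) (hU : U = ⋃ m ∈ {m | (Yn m ∩ closedBall x r).Nonempty}, Yn m) :
    (∀ ε > 0, ∃ M : ℕ, ∀ m ≥ M, ∀ z ∈ ⋃ k ∈ {k | m ≤ k}, Yn (nk k),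
        ‖F z‖ ≤ ε) ∧
      TendstoUniformly
        (fun m z => (1 - (⋃ k ∈ Finset.range m, Yn (nk k)).indicator (1 : X → ℂ) z) * F z)
        (fun z => (1 - U.indicator (1 : X → ℂ) z) * F z) atTop := by
  have key := stmt6_key Y Yn hclopen hdisj hunion hdiam F hF x r hvan nk hmono henum
  have hU' : U = ⋃ k, Yn (nk k) := by
    rw [hU]; ext p
    simp only [mem_iUnion, mem_setOf_eq, exists_prop]
    constructor
    · rintro ⟨m, hm, hp⟩
      obtain ⟨kk, rfl⟩ := (henum m).mp hm
      exact ⟨kk, hp⟩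
    · rintro ⟨kk, hp⟩
      exact ⟨nk kk, (henum _).mpr ⟨kk, rfl⟩, hp⟩
  constructor
  · intro ε hε
    obtain ⟨M, hM⟩ := key ε hε
    refine ⟨M, fun m hm z hzmem => ?_⟩
    simp only [mem_iUnion, mem_setOf_eq, exists_prop] at hzmem
    obtain ⟨kk, hkk, hzk⟩ := hzmem
    exact hM kk (le_trans hm hkk) z hzk
  · rw [Metric.tendstoUniformly_iff]
    intro ε hε
    obtain ⟨M, hM⟩ := key (ε / 2) (by linarith)
    filter_upwards [eventually_ge_atTop M] with m hm z
    by_cases hzU : z ∈ U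
    · obtain ⟨kk, hzk⟩ := mem_iUnion.mp (hU' ▸ hzU)
      by_cases hkm : kk < m
      · have h1 : z ∈ ⋃ k ∈ Finset.range m, Yn (nk k) := by
          simp only [mem_iUnion, Finset.mem_range, exists_prop]
          exact ⟨kk, hkm, hzk⟩
        rw [indicator_of_mem h1, indicator_of_mem hzU]
        simpa using hε
      · have h1 : z ∉ ⋃ k ∈ Finset.range m, Yn (nk k) := by
          simp only [mem_iUnion, Finset.mem_range, exists_prop, not_exists, not_and]
          intro k' hk' hzk'
          exact Set.disjoint_left.mp
            (hdisj (hmono.injective.ne (by omega : k' ≠ kk))) hzk' hzk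
        rw [indicator_of_notMem h1, indicator_of_mem hzU]
        have : ‖F z‖ ≤ ε / 2 := hM kk (by omega) z hzk
        rw [Complex.dist_eq]
        simp only [sub_zero, sub_self, zero_mul, one_mul]
        simpa using lt_of_le_of_lt this (by linarith)
    · have h1 : z ∉ ⋃ k ∈ Finset.range m, Yn (nk k) := by
        simp only [mem_iUnion, Finset.mem_range, exists_prop, not_exists, not_and]
        intro k' _ hzk'
        exact hzU (hU' ▸ mem_iUnion.mpr ⟨k', hzk'⟩)
      rw [indicator_of_notMem h1, indicator_of_notMem hzU]
      simpa using hε
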